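/- With the midpoint intervals (a_i, b_i] as above and k ≥ 2, p ≥ 1 fixed: the number of indices i ∈ {1,…,r−1} whose boundary power equals p, and whose assigned grid point c·k^(−p) lies within any single interval of the form [m·k^{−(p−1)}, (m+1)·k^{−(p−1)}) for m ∈ ℕ, is at most k−1. -/

import Mathlib

open scoped Classical

theorem stmt_15 (r k p : ℕ) (hk : 2 ≤ k) (hp : 1 ≤ p) (ℓ : ℕ → ℝ)
    (hpos : ∀ j < r, 0 < ℓ j) (hsum : ∑ j ∈ Finset.range r, ℓ j = 1)
    (a b : ℕ → ℝ)
    (ha : ∀ i, a i = (∑ j ∈ Finset.range i, ℓ j) - ℓ (i - 1) / 2)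
    (hb : ∀ i, b i = (∑ j ∈ Finset.range i, ℓ j) + ℓ i / 2)
    (c : ℕ → ℕ)
    (hc : ∀ i ∈ Finset.Ico 1 r,
      (c i : ℝ) * (k : ℝ) ^ (-(p : ℤ)) ∈ Set.Ioc (a i) (b i))
    (hmin : ∀ i ∈ Finset.Ico 1 r, ∀ c' : ℕ,
      (c' : ℝ) * (k : ℝ) ^ (-(p : ℤ) + 1) ∉ Set.Ioc (a i) (b i))
    (m : ℕ) :
    ((Finset.Ico 1 r).filter (fun i =>
        (c i : ℝ) * (k : ℝ) ^ (-(p : ℤ)) ∈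
          Set.Ico ((m : ℝ) * (k : ℝ) ^ (-(p : ℤ) + 1))
                  (((m : ℝ) + 1) * (k : ℝ) ^ (-(p : ℤ) + 1)))).card ≤ k - 1 := by
  have hk0 : (0 : ℝ) < (k : ℝ) := by
    have : (0:ℕ) < k := by omega
    exact_mod_cast this
  have hkne : (k : ℝ) ≠ 0 := ne_of_gt hk0
  have hxpos : (0 : ℝ) < (k : ℝ) ^ (-(p : ℤ)) := zpow_pos hk0 _
  have hsplit : (k : ℝ) ^ (-(p : ℤ) + 1) = (k : ℝ) ^ (-(p : ℤ)) * k := by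
    rw [zpow_add₀ hkne, zpow_one]
  -- disjointness of the intervals
  have hdisj : ∀ i j : ℕ, i ∈ Finset.Ico 1 r → j ∈ Finset.Ico 1 r → i < j →
      b i ≤ a j := by
    intro i j hi hj hij
    rw [Finset.mem_Ico] at hi hj
    have hj1 : j - 1 + 1 = j := by omega
    have haj : a j = (∑ t ∈ Finset.range (j-1), ℓ t) + ℓ (j-1) / 2 := by
      rw [ha]
      have : ∑ t ∈ Finset.range j, ℓ t
          = (∑ t ∈ Finset.range (j-1), ℓ t) + ℓ (j-1) := by
        have h := Finset.sum_range_succ ℓ (j-1)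
        rw [hj1] at h; exact h
      rw [this]; ring
    rw [hb, haj]
    rcases eq_or_lt_of_le (by omega : i ≤ j - 1) with h | h
    · subst h; rfl
    · have hsumle : (∑ t ∈ Finset.range i, ℓ t) + ℓ i ≤ ∑ t ∈ Finset.range (j-1), ℓ t := by
        have : ∑ t ∈ Finset.range (j-1), ℓ t
            = (∑ t ∈ Finset.range i, ℓ t) + ∑ t ∈ Finset.Ico i (j-1), ℓ t := by
          rw [← Finset.sum_range_add_sum_Ico _ (by omega : i ≤ j-1)]
        rw [this]
        gcongr
        have hmem : i ∈ Finset.Ico i (j-1) := Finset.mem_Ico.mpr ⟨le_rfl, h⟩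
        refine Finset.single_le_sum (fun t ht => ?_) hmem |>.trans_eq rfl
        exact le_of_lt (hpos t (by rw [Finset.mem_Ico] at ht; omega))
      have hli : 0 < ℓ i := hpos i (by omega)
      have hlj : 0 < ℓ (j-1) := hpos (j-1) (by omega)
      nlinarith
  -- c is injective on the filter, with values in Ico (m*k+1) (m*k+k)
  have hcard := Finset.card_le_card_of_injOn c
    (s := (Finset.Ico 1 r).filter (fun i =>
        (c i : ℝ) * (k : ℝ) ^ (-(p : ℤ)) ∈
          Set.Ico ((m : ℝ) * (k : ℝ) ^ (-(p : ℤ) + 1))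
                  (((m : ℝ) + 1) * (k : ℝ) ^ (-(p : ℤ) + 1))))
    (t := Finset.Ico (m*k+1) (m*k+k))
    (by
      intro i hi
      rw [Finset.mem_coe, Finset.mem_filter] at hi
      obtain ⟨hir, hIco⟩ := hi
      obtain ⟨hlo, hhi⟩ := hIco
      rw [hsplit] at hlo hhi
      -- lower: m*k ≤ c i
      have h1 : (↑(m*k) : ℝ) * (k:ℝ) ^ (-(p:ℤ)) ≤ (c i : ℝ) * (k:ℝ) ^ (-(p:ℤ)) := by
        push_cast; nlinarith
      have h1' : m * k ≤ c i := by
        have := le_of_mul_le_mul_right h1 hxpos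
        exact_mod_cast this
      -- upper: c i < m*k + k
      have h2 : (c i : ℝ) * (k:ℝ) ^ (-(p:ℤ)) < (↑(m*k+k) : ℝ) * (k:ℝ) ^ (-(p:ℤ)) := by
        push_cast; nlinarith
      have h2' : c i < m * k + k := by
        have := lt_of_mul_lt_mul_right h2 (le_of_lt hxpos)
        exact_mod_cast this
      -- c i ≠ m*k
      have hne : c i ≠ m * k := by
        intro heq
        apply hmin i hir m
        have : (m : ℝ) * (k:ℝ) ^ (-(p:ℤ) + 1) = (c i : ℝ) * (k:ℝ) ^ (-(p:ℤ)) := by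
          rw [hsplit, heq]; push_cast; ring
        rw [this]
        exact hc i hir
      exact Finset.mem_coe.mpr (Finset.mem_Ico.mpr ⟨by omega, h2'⟩))
    (by
      intro i hi j hj heq
      rw [Finset.mem_coe, Finset.mem_filter] at hi hj
      by_contra hne
      rcases lt_or_gt_of_ne hne with h | h
      · have h1 := (hc i hi.1).2
        have h2 := (hc j hj.1).1
        have h3 := hdisj i j hi.1 hj.1 h
        rw [heq] at h1
        linarith
      · have h1 := (hc j hj.1).2
        have h2 := (hc i hi.1).1
        have h3 := hdisj j i hj.1 hi.1 h
        rw [heq] at h2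
        linarith)
  calc _ ≤ (Finset.Ico (m*k+1) (m*k+k)).card := hcard
    _ = k - 1 := by rw [Nat.card_Ico]; omega
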